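/- For every m ≥ 0, the minimum of Σ_{i=1}^{3} (v_i²/z_i + z_i − 2v_i) over v_i ≥ m, z_i > 0 subject to Σ_{i=1}^{3} v_i/z_i ≥ 4 equals m/4, attained at v_i = m and z_i = 3m/4 for all i. -/

import Mathlib

lemma key_ineq (m v z : ℝ) (hm : 0 ≤ m) (hv : m ≤ v) (hz : 0 < z) :
    7 * m / 16 * (v / z) - m / 2 ≤ v ^ 2 / z + z - 2 * v := by
  have hnum : 7 * m / 16 * v - m / 2 * z ≤ v ^ 2 + z ^ 2 - 2 * v * z := by
    rcases le_or_gt (8 * z) (7 * v) with h | h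
    · nlinarith [sq_nonneg (3 * v - 4 * z), mul_nonneg (sub_nonneg.2 hv) (sub_nonneg.2 h)]
    · nlinarith [sq_nonneg (v - z), mul_nonneg hm (sub_nonneg.2 h.le)]
  have h2 : (v ^ 2 / z + z - 2 * v) - (7 * m / 16 * (v / z) - m / 2)
      = (v ^ 2 + z ^ 2 - 2 * v * z - (7 * m / 16 * v - m / 2 * z)) / z := by
    field_simp
  have h3 : 0 ≤ (v ^ 2 + z ^ 2 - 2 * v * z - (7 * m / 16 * v - m / 2 * z)) / z :=
    div_nonneg (by linarith) hz.le
  linarith [h2 ▸ h3]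

theorem quadratic_program_Qk
    (m : ℝ) (hm : 0 ≤ m) :
    IsGLB {c : ℝ | ∃ v z : Fin 3 → ℝ,
        (∀ i, m ≤ v i) ∧ (∀ i, 0 < z i) ∧ (4 ≤ ∑ i, v i / z i) ∧
        c = ∑ i, (v i ^ 2 / z i + z i - 2 * v i)} (m / 4) ∧
    (0 < m →
      (4 ≤ ∑ _i : Fin 3, m / (3 * m / 4)) ∧
      (∑ _i : Fin 3, (m ^ 2 / (3 * m / 4) + 3 * m / 4 - 2 * m)) = m / 4) := by
  constructor
  · constructor
    · -- lower bound
      rintro c ⟨v, z, hv, hz, hsum, rfl⟩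
      have hstep : ∀ i : Fin 3, 7 * m / 16 * (v i / z i) - m / 2
          ≤ v i ^ 2 / z i + z i - 2 * v i := fun i => key_ineq m (v i) (z i) hm (hv i) (hz i)
      have hS : ∑ i, (7 * m / 16 * (v i / z i) - m / 2)
          ≤ ∑ i, (v i ^ 2 / z i + z i - 2 * v i) :=
        Finset.sum_le_sum fun i _ => hstep i
      have hmul : 7 * m / 16 * 4 ≤ 7 * m / 16 * ∑ i, v i / z i :=
        mul_le_mul_of_nonneg_left hsum (by linarith)
      have hEq : ∑ i, (7 * m / 16 * (v i / z i) - m / 2)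
          = 7 * m / 16 * (∑ i, v i / z i) - 3 * (m / 2) := by
        simp [Fin.sum_univ_three]
        ring
      linarith
    · -- greatest lower bound
      intro b hb
      rcases eq_or_lt_of_le hm with hm0 | hm0
      · -- m = 0 : elements t/3 for all t > 0
        have hseq : ∀ t : ℝ, 0 < t → b ≤ t / 3 := by
          intro t ht
          refine hb ⟨fun _ => 4 * t / 3, fun _ => t, fun i => by linarith [hm0], fun i => ht,
            ?_, ?_⟩
          · have h4 : 4 * t / 3 / t = 4 / 3 := by
              field_simp
            simp [Fin.sum_univ_three, h4]
            norm_num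
          · field_simp [Fin.sum_univ_three]
            simp only [Finset.sum_const, Finset.card_univ, Fintype.card_fin, nsmul_eq_mul]
            ring
        rw [← hm0]
        by_contra hpos
        push_neg at hpos
        norm_num at hpos
        have := hseq b hpos
        linarith
      · -- m > 0 : exact witness
        refine hb ⟨fun _ => m, fun _ => 3 * m / 4, fun i => le_refl m,
          fun i => by positivity, ?_, ?_⟩
        · have h4 : m / (3 * m / 4) = 4 / 3 := by
            rw [div_div_eq_mul_div, mul_comm 3 m]
            exact mul_div_mul_left 4 3 hm0.ne'
          simp [Fin.sum_univ_three, h4]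
          norm_num
        · field_simp [Fin.sum_univ_three]
          simp only [Finset.sum_const, Finset.card_univ, Fintype.card_fin, nsmul_eq_mul]
          ring
  · intro hm0
    constructor
    · have h4 : m / (3 * m / 4) = 4 / 3 := by
        rw [div_div_eq_mul_div, mul_comm 3 m]
        exact mul_div_mul_left 4 3 hm0.ne'
      simp [Fin.sum_univ_three, h4]
      norm_num
    · field_simp [Fin.sum_univ_three]
      simp only [Finset.sum_const, Finset.card_univ, Fintype.card_fin, nsmul_eq_mul]
      ring
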